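/- Let λ be a real number. If the function h(r) = ((4 E'(r) K(r) − π) / m(r)) · (m(r)/r)^λ is strictly increasing on (0,1), then λ ≤ 0. -/

import Mathlib

open Real Set Filter

/-- Complete elliptic integral of the first kind. -/
noncomputable def K (r : ℝ) : ℝ :=
  ∫ θ in (0:ℝ)..(π/2), 1 / Real.sqrt (1 - r^2 * Real.sin θ ^ 2)

/-- Complete elliptic integral of the second kind. -/
noncomputable def E (r : ℝ) : ℝ :=
  ∫ θ in (0:ℝ)..(π/2), Real.sqrt (1 - r^2 * Real.sin θ ^ 2)

/-- Complementary complete elliptic integral of the first kind: `K'(r) = K(√(1-r²))`. -/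
noncomputable def K' (r : ℝ) : ℝ := K (Real.sqrt (1 - r^2))

/-- Complementary complete elliptic integral of the second kind: `E'(r) = E(√(1-r²))`. -/
noncomputable def E' (r : ℝ) : ℝ := E (Real.sqrt (1 - r^2))

/-- The special function `m(r) = (2/π) r'² K(r) K'(r)` (here `r'² = 1 - r²`). -/
noncomputable def m (r : ℝ) : ℝ := (2/π) * (1 - r^2) * K r * K' r

/-- The function `h` from Lemma 2.3, depending on the parameter `lam`. -/
noncomputable def h (lam r : ℝ) : ℝ :=
  ((4 * E' r * K r - π) / m r) * (m r / r) ^ lam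

namespace Stmt16Aux

open scoped Topology

lemma aux_pos {r : ℝ} (hr : r^2 < 1) (θ : ℝ) : 0 < 1 - r^2 * Real.sin θ^2 := by
  have h1 : r^2 * Real.sin θ^2 ≤ r^2 * 1 :=
    mul_le_mul_of_nonneg_left (Real.sin_sq_le_one θ) (sq_nonneg r)
  linarith

lemma contK {r : ℝ} (hr : r^2 < 1) :
    Continuous (fun θ : ℝ => 1 / Real.sqrt (1 - r^2 * Real.sin θ^2)) := by
  apply Continuous.div continuous_const
  · exact (continuous_const.sub (continuous_const.mul (Real.continuous_sin.pow 2))).sqrt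
  · intro θ
    exact (Real.sqrt_pos.mpr (aux_pos hr θ)).ne'

lemma K_ge {r : ℝ} (hr : r^2 < 1) : π/2 ≤ K r := by
  have h1 : (∫ _θ in (0:ℝ)..(π/2), (1:ℝ)) ≤ K r := by
    apply intervalIntegral.integral_mono_on (by positivity)
      intervalIntegrable_const ((contK hr).intervalIntegrable _ _)
    intro θ _
    have hpos := aux_pos hr θ
    have hle : Real.sqrt (1 - r^2 * Real.sin θ^2) ≤ 1 :=
      Real.sqrt_le_one.mpr (by nlinarith [sq_nonneg (r * Real.sin θ)])
    exact one_le_one_div (Real.sqrt_pos.mpr hpos) hle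
  simpa using h1

lemma K_le {r : ℝ} (hr : r^2 < 1) : K r ≤ (π/2) / Real.sqrt (1 - r^2) := by
  have h1 : K r ≤ ∫ _θ in (0:ℝ)..(π/2), 1 / Real.sqrt (1 - r^2) := by
    apply intervalIntegral.integral_mono_on (by positivity)
      ((contK hr).intervalIntegrable _ _) intervalIntegrable_const
    intro θ _
    apply one_div_le_one_div_of_le (Real.sqrt_pos.mpr (by linarith))
    apply Real.sqrt_le_sqrt
    have h1 : r^2 * Real.sin θ^2 ≤ r^2 * 1 :=
      mul_le_mul_of_nonneg_left (Real.sin_sq_le_one θ) (sq_nonneg r)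
    linarith
  calc K r ≤ ∫ _θ in (0:ℝ)..(π/2), 1 / Real.sqrt (1 - r^2) := h1
    _ = (π/2) / Real.sqrt (1 - r^2) := by
        simp [intervalIntegral.integral_const]
        ring

lemma E_ge {s : ℝ} (hs : s^2 ≤ 1) : 1 ≤ E s := by
  have h1 : (∫ θ in (0:ℝ)..(π/2), Real.cos θ) ≤ E s := by
    apply intervalIntegral.integral_mono_on (by positivity)
      (Real.continuous_cos.intervalIntegrable _ _)
      (((continuous_const.sub (continuous_const.mul (Real.continuous_sin.pow 2))).sqrt).intervalIntegrable _ _)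
    intro θ hθ
    have hc : 0 ≤ Real.cos θ := Real.cos_nonneg_of_mem_Icc ⟨by linarith [hθ.1, pi_pos], hθ.2⟩
    calc Real.cos θ = Real.sqrt (Real.cos θ^2) := (Real.sqrt_sq hc).symm
      _ ≤ Real.sqrt (1 - s^2 * Real.sin θ^2) := by
          apply Real.sqrt_le_sqrt
          have h2 : s^2 * Real.sin θ^2 ≤ 1 * Real.sin θ^2 :=
            mul_le_mul_of_nonneg_right hs (sq_nonneg _)
          nlinarith [Real.sin_sq_add_cos_sq θ]
  simpa [integral_cos] using h1

/-- The logarithmic majorant of `K'` (and of `m`). -/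
noncomputable def Lf (r : ℝ) : ℝ := (Real.sqrt 2 * π / 2) * Real.log (3 / r)

lemma K'_le {r : ℝ} (h0 : 0 < r) (h2 : r ≤ 1/2) : K' r ≤ Lf r := by
  have hKdef : K' r = ∫ θ in (0:ℝ)..(π/2),
      1 / Real.sqrt (1 - (Real.sqrt (1-r^2))^2 * Real.sin θ ^ 2) := rfl
  have hπ := pi_pos
  have hr2 : r^2 ≤ 1/4 := by nlinarith
  have hs2 : (Real.sqrt (1 - r^2))^2 = 1 - r^2 := Real.sq_sqrt (by nlinarith)
  set g : ℝ → ℝ := fun θ => Real.sqrt 2 / Real.sqrt (r^2 + (1 - 2*θ/π)^2) with hg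
  have hBpos : ∀ θ : ℝ, 0 < r^2 + (1 - 2*θ/π)^2 := fun θ => by positivity
  have hgcont : Continuous g := by
    apply Continuous.div continuous_const
    · fun_prop
    · intro θ; exact (Real.sqrt_pos.mpr (hBpos θ)).ne'
  have hscont : Continuous (fun θ : ℝ => Real.sqrt (1 - (Real.sqrt (1-r^2))^2 * Real.sin θ^2)) :=
    (continuous_const.sub (continuous_const.mul (Real.continuous_sin.pow 2))).sqrt
  have hpt : ∀ θ ∈ Icc (0:ℝ) (π/2),
      1 / Real.sqrt (1 - (Real.sqrt (1-r^2))^2 * Real.sin θ^2) ≤ g θ := by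
    intro θ hθ
    rw [hs2]
    have ht0 : 0 ≤ 1 - 2*θ/π := by
      rw [sub_nonneg, div_le_one hπ]; linarith [hθ.2]
    have hcos : 1 - 2*θ/π ≤ Real.cos θ := by
      have := Real.one_sub_mul_le_cos hθ.1 hθ.2
      have heq : 2/π*θ = 2*θ/π := by ring
      linarith [heq ▸ this]
    have hcos2 : (1 - 2*θ/π)^2 ≤ Real.cos θ^2 := by nlinarith
    have hmain : (r^2 + (1 - 2*θ/π)^2)/2 ≤ 1 - (1-r^2) * Real.sin θ^2 := by
      nlinarith [Real.sin_sq_add_cos_sq θ, sq_nonneg (Real.sin θ)]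
    have hB := hBpos θ
    have hsle : Real.sqrt (r^2 + (1 - 2*θ/π)^2) / Real.sqrt 2
        ≤ Real.sqrt (1 - (1-r^2)*Real.sin θ^2) := by
      rw [← Real.sqrt_div hB.le]
      exact Real.sqrt_le_sqrt hmain
    have hpos2 : 0 < Real.sqrt (r^2 + (1 - 2*θ/π)^2) / Real.sqrt 2 := by positivity
    calc 1 / Real.sqrt (1 - (1-r^2) * Real.sin θ^2)
        ≤ 1 / (Real.sqrt (r^2 + (1 - 2*θ/π)^2) / Real.sqrt 2) :=
          one_div_le_one_div_of_le hpos2 hsle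
      _ = g θ := by rw [one_div_div]
  have hF : ∀ θ ∈ uIcc (0:ℝ) (π/2),
      HasDerivAt (fun x : ℝ => -(Real.sqrt 2 * π / 2) * Real.arsinh ((1 - 2*x/π)/r)) (g θ) θ := by
    intro θ _
    have hu : HasDerivAt (fun x : ℝ => (1 - 2*x/π)/r) (-(2/π)/r) θ := by
      have h1 : HasDerivAt (fun x : ℝ => 1 - 2*x/π) (-(2/π)) θ := by
        simpa using (((hasDerivAt_id θ).const_mul (2:ℝ)).div_const π).const_sub 1
      exact h1.div_const r
    have h2 := ((Real.hasDerivAt_arsinh ((1 - 2*θ/π)/r)).comp θ hu).const_mul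
      (-(Real.sqrt 2 * π / 2))
    have h3 : HasDerivAt (fun x : ℝ => -(Real.sqrt 2 * π / 2) * Real.arsinh ((1 - 2*x/π)/r))
        (-(Real.sqrt 2 * π / 2) * ((Real.sqrt (1 + ((1 - 2*θ/π)/r)^2))⁻¹ * (-(2/π)/r))) θ := by
      simpa [Function.comp] using h2
    convert h3 using 1
    have hsq : Real.sqrt (1 + ((1 - 2*θ/π)/r)^2)
        = Real.sqrt (r^2 + (1 - 2*θ/π)^2) / r := by
      rw [show 1 + ((1 - 2*θ/π)/r)^2 = (r^2 + (1 - 2*θ/π)^2)/r^2 by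
        field_simp]
      rw [Real.sqrt_div (hBpos θ).le, Real.sqrt_sq h0.le]
    rw [hg, hsq]
    have hBne : Real.sqrt (r^2 + (1 - 2*θ/π)^2) ≠ 0 := (Real.sqrt_pos.mpr (hBpos θ)).ne'
    field_simp
  have hint : (∫ θ in (0:ℝ)..(π/2), g θ) = (Real.sqrt 2 * π / 2) * Real.arsinh (1/r) := by
    rw [intervalIntegral.integral_eq_sub_of_hasDerivAt hF (hgcont.intervalIntegrable _ _)]
    have e1 : (1 - 2*(π/2)/π)/r = 0 := by field_simp; ring
    have e2 : (1 - 2*(0:ℝ)/π)/r = 1/r := by norm_num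
    rw [e1, e2, Real.arsinh_zero]
    ring
  have hKle : K' r ≤ ∫ θ in (0:ℝ)..(π/2), g θ := by
    rw [hKdef]
    apply intervalIntegral.integral_mono_on (by positivity) ?_ (hgcont.intervalIntegrable _ _) hpt
    apply Continuous.intervalIntegrable
    apply Continuous.div continuous_const hscont
    intro θ
    refine (Real.sqrt_pos.mpr ?_).ne'
    rw [hs2]
    nlinarith [Real.sin_sq_le_one θ, sq_nonneg (Real.sin θ)]
  have harsinh : Real.arsinh (1/r) ≤ Real.log (3/r) := by
    have hr1 : (1:ℝ) ≤ 1/r := one_le_one_div h0 (by linarith)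
    have hsq : Real.sqrt (1 + (1/r)^2) ≤ 1 + 1/r := by
      rw [show (1:ℝ) + 1/r = Real.sqrt ((1+1/r)^2) from (Real.sqrt_sq (by linarith)).symm]
      apply Real.sqrt_le_sqrt; nlinarith
    rw [Real.arsinh]
    apply Real.log_le_log (by positivity)
    have : 3/r = 1/r + (1/r + 1/r) := by ring
    rw [this]
    linarith
  calc K' r ≤ ∫ θ in (0:ℝ)..(π/2), g θ := hKle
    _ = (Real.sqrt 2 * π / 2) * Real.arsinh (1/r) := hint
    _ ≤ Lf r := mul_le_mul_of_nonneg_left harsinh (by positivity)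

lemma Lf_ge_one {r : ℝ} (h0 : 0 < r) (h2 : r ≤ 1/2) : 1 ≤ Lf r := by
  have h6 : (6:ℝ) ≤ 3 / r := by
    rw [le_div_iff₀ h0]; linarith
  have hlog : 1 ≤ Real.log (3/r) := by
    rw [Real.le_log_iff_exp_le (by linarith)]
    have := Real.exp_one_lt_d9
    linarith
  have hsqrt2 : (1:ℝ) ≤ Real.sqrt 2 := by
    rw [show (1:ℝ) = Real.sqrt 1 by simp]
    exact Real.sqrt_le_sqrt (by norm_num)
  have hc : (1:ℝ) ≤ Real.sqrt 2 * π / 2 := by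
    nlinarith [pi_gt_three]
  calc (1:ℝ) = 1 * 1 := by ring
    _ ≤ (Real.sqrt 2 * π / 2) * Real.log (3/r) :=
        mul_le_mul hc hlog zero_le_one (by linarith)

lemma m_ge_one {r : ℝ} (h0 : 0 < r) (h2 : r ≤ 1/2) : 1 ≤ m r := by
  have hπ := pi_pos
  have hr2 : r^2 ≤ 1/4 := by nlinarith
  have hr2' : r^2 < 1 := by nlinarith
  have hs2 : (Real.sqrt (1 - r^2))^2 < 1 := by
    rw [Real.sq_sqrt (by nlinarith)]; nlinarith
  have hK := K_ge hr2'
  have hK' : π/2 ≤ K' r := K_ge hs2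
  have hKK : π/2*(π/2) ≤ K r * K' r :=
    mul_le_mul hK hK' (by positivity) (by linarith)
  have hmr : m r = (2/π*(1-r^2)) * (K r * K' r) := by unfold m; ring
  rw [hmr]
  have h34 : (2/π*(3/4)) ≤ 2/π*(1-r^2) :=
    mul_le_mul_of_nonneg_left (by linarith) (by positivity)
  have hstep : (2/π*(3/4)) * (π/2*(π/2)) ≤ (2/π*(1-r^2)) * (K r * K' r) :=
    mul_le_mul h34 hKK (by positivity) (mul_nonneg (by positivity) (by nlinarith))
  have heq : (2/π*(3/4)) * (π/2*(π/2)) = 3*π/8 := by field_simp; ring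
  nlinarith [pi_gt_three]

lemma m_le_Lf {r : ℝ} (h0 : 0 < r) (h2 : r ≤ 1/2) : m r ≤ Lf r := by
  have hπ := pi_pos
  have hr2' : r^2 < 1 := by nlinarith
  have h1r : (0:ℝ) < 1 - r^2 := by nlinarith
  set w := Real.sqrt (1 - r^2) with hw
  have hw2 : w^2 = 1 - r^2 := Real.sq_sqrt h1r.le
  have hw0 : 0 < w := Real.sqrt_pos.mpr h1r
  have hw1 : w ≤ 1 := Real.sqrt_le_one.mpr (by nlinarith)
  have hs2 : w^2 < 1 := by rw [hw2]; nlinarith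
  have hK'0 : (0:ℝ) ≤ K' r := le_trans (by positivity) (K_ge hs2)
  have hKle : K r ≤ (π/2) / w := K_le hr2'
  have step1 : m r ≤ 2/π*(1-r^2)*((π/2)/w)*K' r := by
    unfold m
    exact mul_le_mul_of_nonneg_right
      (mul_le_mul_of_nonneg_left hKle (by positivity)) hK'0
  have step2 : 2/π*(1-r^2)*((π/2)/w)*K' r = w * K' r := by
    rw [← hw2]; field_simp
  have step3 : w * K' r ≤ 1 * K' r := mul_le_mul_of_nonneg_right hw1 hK'0
  calc m r ≤ 2/π*(1-r^2)*((π/2)/w)*K' r := step1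
    _ = w * K' r := step2
    _ ≤ 1 * K' r := step3
    _ = K' r := one_mul _
    _ ≤ Lf r := K'_le h0 h2

lemma A_ge {r : ℝ} (h0 : 0 < r) (h2 : r ≤ 1/2) : π ≤ 4 * E' r * K r - π := by
  have hπ := pi_pos
  have hr2' : r^2 < 1 := by nlinarith
  have hs2 : (Real.sqrt (1 - r^2))^2 ≤ 1 := by
    rw [Real.sq_sqrt (by nlinarith)]; nlinarith
  have hE : 1 ≤ E' r := E_ge hs2
  have hK := K_ge hr2'
  have : 1*(π/2) ≤ E' r * K r := mul_le_mul hE hK (by positivity) (by linarith)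
  nlinarith

lemma h_lower {lam r : ℝ} (hlam : 0 ≤ lam) (h0 : 0 < r) (h2 : r ≤ 1/2) :
    π * (Lf r)⁻¹ / r ^ lam ≤ h lam r := by
  have hm1 := m_ge_one h0 h2
  have hmL := m_le_Lf h0 h2
  have hm0 : (0:ℝ) < m r := by linarith
  have hL1 := Lf_ge_one h0 h2
  have hA := A_ge h0 h2
  have hπ := pi_pos
  have hr0 : (0:ℝ) < r ^ lam := Real.rpow_pos_of_pos h0 lam
  have hrw : h lam r = (4 * E' r * K r - π) * ((m r) ^ lam / m r) / r ^ lam := by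
    unfold h
    rw [Real.div_rpow hm0.le h0.le]
    field_simp
  have key : (Lf r)⁻¹ ≤ (m r) ^ lam / m r := by
    have hsub : (m r) ^ lam / m r = (m r) ^ (lam - 1) := by
      rw [Real.rpow_sub hm0, Real.rpow_one]
    rw [hsub]
    rcases le_or_gt 1 lam with hc | hc
    · calc (Lf r)⁻¹ ≤ 1 := inv_le_one_of_one_le₀ hL1
        _ ≤ (m r) ^ (lam - 1) := Real.one_le_rpow hm1 (by linarith)
    · calc (Lf r)⁻¹ = (Lf r) ^ (-1:ℝ) := (Real.rpow_neg_one _).symm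
        _ ≤ (Lf r) ^ (lam - 1) :=
            Real.rpow_le_rpow_of_exponent_le hL1 (by linarith)
        _ ≤ (m r) ^ (lam - 1) :=
            Real.rpow_le_rpow_of_nonpos hm0 hmL (by linarith)
  rw [hrw]
  have hnum : π * (Lf r)⁻¹ ≤ (4 * E' r * K r - π) * ((m r) ^ lam / m r) :=
    mul_le_mul hA key (inv_nonneg.mpr (by linarith)) (by linarith)
  exact (div_le_div_iff_of_pos_right hr0).mpr hnum

lemma tendsto_lower {lam : ℝ} (hlam : 0 < lam) :
    Tendsto (fun r : ℝ => π * (Lf r)⁻¹ / r ^ lam) (𝓝[>] (0:ℝ)) atTop := by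
  have hπ := pi_pos
  have heq : ∀ r ∈ Ioi (0:ℝ),
      π * (Lf r)⁻¹ / r ^ lam = π * (Lf r * r ^ lam)⁻¹ := by
    intro r _
    rw [mul_inv]
    ring
  have hpow : Tendsto (fun r : ℝ => r ^ lam) (𝓝[>] (0:ℝ)) (𝓝 0) := by
    have hcont := (Real.continuousAt_rpow_const 0 lam (Or.inr hlam.le)).tendsto
    rw [Real.zero_rpow hlam.ne'] at hcont
    exact hcont.mono_left nhdsWithin_le_nhds
  have hlog := tendsto_log_mul_rpow_nhdsGT_zero hlam
  have hbase : Tendsto (fun r : ℝ => Lf r * r ^ lam) (𝓝[>] (0:ℝ)) (𝓝 0) := by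
    have h1 : Tendsto
        (fun r : ℝ => (Real.sqrt 2 * π / 2) * (Real.log 3 * r ^ lam - Real.log r * r ^ lam))
        (𝓝[>] (0:ℝ)) (𝓝 0) := by
      have h2 := ((hpow.const_mul (Real.log 3)).sub hlog).const_mul (Real.sqrt 2 * π / 2)
      simpa using h2
    apply h1.congr'
    filter_upwards [self_mem_nhdsWithin] with r (hr : 0 < r)
    unfold Lf
    rw [Real.log_div (by norm_num) hr.ne']
    ring
  have hbase' : Tendsto (fun r : ℝ => Lf r * r ^ lam) (𝓝[>] (0:ℝ)) (𝓝[>] 0) := by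
    apply tendsto_nhdsWithin_of_tendsto_nhds_of_eventually_within _ hbase
    filter_upwards [Ioo_mem_nhdsGT_of_mem (show (0:ℝ) ∈ Ico (0:ℝ) (1/2) by norm_num)]
      with r hr
    have h1 := Lf_ge_one hr.1 hr.2.le
    have h2 : (0:ℝ) < r ^ lam := Real.rpow_pos_of_pos hr.1 lam
    exact mul_pos (by linarith) h2
  have hinv : Tendsto (fun r : ℝ => (Lf r * r ^ lam)⁻¹) (𝓝[>] (0:ℝ)) atTop :=
    hbase'.inv_tendsto_nhdsGT_zero
  have hfin := hinv.const_mul_atTop hπ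
  apply hfin.congr'
  filter_upwards [self_mem_nhdsWithin] with r (hr : 0 < r)
  exact (heq r hr).symm

end Stmt16Aux

open Stmt16Aux Topology in
theorem stmt_16 (lam : ℝ) (hmono : StrictMonoOn (h lam) (Set.Ioo (0:ℝ) 1)) :
    lam ≤ 0 := by
  by_contra hneg
  push_neg at hneg
  have hhalf : (1/2 : ℝ) ∈ Set.Ioo (0:ℝ) 1 := by norm_num
  have hev1 : ∀ᶠ r in 𝓝[>] (0:ℝ), h lam (1/2) < π * (Lf r)⁻¹ / r ^ lam :=
    (tendsto_lower hneg).eventually_gt_atTop _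
  have hev2 : ∀ᶠ r in 𝓝[>] (0:ℝ), r ∈ Ioo (0:ℝ) (1/2) :=
    eventually_of_mem (Ioo_mem_nhdsGT_of_mem
      (show (0:ℝ) ∈ Ico (0:ℝ) (1/2) by norm_num)) (fun x hx => hx)
  obtain ⟨x, hx1, hx2⟩ := (hev1.and hev2).exists
  have hle := h_lower hneg.le hx2.1 hx2.2.le
  have hlt := hmono ⟨hx2.1, by linarith [hx2.2]⟩ hhalf hx2.2
  linarith
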